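/- Let h : M × ℝ/ℤ → M × ℝ/ℤ be a homeomorphism of the form h(x, θ) = (h̄(x), θ + U(x,θ) mod 1) with U continuous, conjugating Φ^f and Φ^g, where h̄ conjugates φ to itself. Then the fiber-average u(x) = ∫₀¹ U(x, θ) dθ satisfies u(φ_t(x)) − u(x) = ∫₀ᵗ (f ∘ h̄ − g)(φ_s(x)) ds for all x ∈ M, t ∈ ℝ. -/

import Mathlib

open MeasureTheory

/-- The skew-product map over `φ` with cocycle `f`, acting on `M × ℝ/ℤ`. -/
noncomputable def skewProd {M : Type*} (φ : ℝ → M → M) (f : M → ℝ) (t : ℝ)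
    (p : M × AddCircle (1 : ℝ)) : M × AddCircle (1 : ℝ) :=
  (φ t p.1, p.2 + (((∫ s in (0:ℝ)..t, f (φ s p.1)) : ℝ) : AddCircle (1 : ℝ)))

/-- Let `h(x,θ) = (h̄(x), θ + U(x,θ) mod 1)` be a homeomorphism of `M × ℝ/ℤ`, with `U`
continuous, conjugating the skew products `Φ^f` and `Φ^g`, where `h̄` conjugates the flow
`φ` to itself.  Then the fiber average `u(x) = ∫₀¹ U(x,θ) dθ` satisfies
`u(φ_t(x)) − u(x) = ∫₀ᵗ (f ∘ h̄ − g)(φ_s(x)) ds` for all `x ∈ M`, `t ∈ ℝ`. -/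
lemma int_valued_zero (k : ℝ → ℝ) (hk : Continuous k) (h0 : k 0 = 0)
    (hz : ∀ t, ∃ n : ℤ, (n : ℝ) = k t) : ∀ t, k t = 0 := by
  intro t
  by_contra hne
  obtain ⟨n, hn⟩ := hz t
  have hn0 : n ≠ 0 := by rintro rfl; exact hne (by simpa using hn.symm)
  have h1 : (1:ℝ) ≤ |k t| := by
    rw [← hn, ← Int.cast_abs]
    exact_mod_cast Int.one_le_abs hn0
  have key : ∃ c : ℝ, c ∈ Set.uIcc (k 0) (k t) ∧ (c = 1/2 ∨ c = -(1/2)) := by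
    rcases le_abs.mp h1 with h | h
    · refine ⟨1/2, ?_, Or.inl rfl⟩
      rw [h0, Set.uIcc_of_le (by linarith)]
      constructor <;> linarith
    · refine ⟨-(1/2), ?_, Or.inr rfl⟩
      rw [h0, Set.uIcc_of_ge (by linarith)]
      constructor <;> linarith
  obtain ⟨c, hc, hc2⟩ := key
  obtain ⟨s, -, hs⟩ := intermediate_value_uIcc (a := (0:ℝ)) (b := t) hk.continuousOn hc
  obtain ⟨m, hm⟩ := hz s
  rw [hs] at hm
  rcases hc2 with rfl | rfl
  · have : (2 * m : ℤ) = (1 : ℤ) := by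
      have : (2 * m : ℝ) = 1 := by linarith
      exact_mod_cast this
    omega
  · have : (2 * m : ℤ) = (-1 : ℤ) := by
      have : (2 * m : ℝ) = -1 := by linarith
      exact_mod_cast this
    omega

theorem stmt17 {M : Type*} [MetricSpace M] [CompactSpace M] [ConnectedSpace M]
    (φ : Flow ℝ M) (f g : M → ℝ) (hf : Continuous f) (hg : Continuous g)
    (hbar : M → M) (U : M × AddCircle (1 : ℝ) → ℝ) (hU : Continuous U)
    (h : M × AddCircle (1 : ℝ) ≃ₜ M × AddCircle (1 : ℝ))
    (hform : ∀ p : M × AddCircle (1 : ℝ),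
      h p = (hbar p.1, p.2 + ((U p : ℝ) : AddCircle (1 : ℝ))))
    (hconj : ∀ (t : ℝ) (p : M × AddCircle (1 : ℝ)),
      skewProd (fun s => φ s) f t (h p) = h (skewProd (fun s => φ s) g t p))
    (hcomm : ∀ (t : ℝ) (x : M), hbar (φ t x) = φ t (hbar x))
    (u : M → ℝ) (hu : ∀ x, u x = ∫ θ : AddCircle (1 : ℝ), U (x, θ)) :
    ∀ (x : M) (t : ℝ),
      u (φ t x) - u x = ∫ s in (0:ℝ)..t, (f (hbar (φ s x)) - g (φ s x)) := by
  intro x t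
  set A : ℝ → ℝ := fun t => ∫ s in (0:ℝ)..t, f (φ s (hbar x)) with hA
  set B : ℝ → ℝ := fun t => ∫ s in (0:ℝ)..t, g (φ s x) with hB
  -- continuity helpers
  have hφs : ∀ y : M, Continuous fun s : ℝ => φ s y := fun y =>
    φ.continuous continuous_id continuous_const
  have hfc : Continuous fun s => f (φ s (hbar x)) := hf.comp (hφs _)
  have hgc : Continuous fun s => g (φ s x) := hg.comp (hφs _)
  have hAc : Continuous A :=
    intervalIntegral.continuous_primitive (fun a b => hfc.intervalIntegrable a b) 0
  have hBc : Continuous B :=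
    intervalIntegral.continuous_primitive (fun a b => hgc.intervalIntegrable a b) 0
  have hcoe : Continuous fun r : ℝ => (r : AddCircle (1:ℝ)) := continuous_quotient_mk'
  -- the mod-1 identity, pointwise
  have hmod : ∀ (τ : ℝ) (θ : AddCircle (1:ℝ)),
      ((U (x, θ) + A τ - B τ - U (φ τ x, θ + ((B τ : ℝ) : AddCircle (1:ℝ))) : ℝ) :
        AddCircle (1:ℝ)) = 0 := by
    intro τ θ
    have H := hconj τ (x, θ)
    rw [hform (x, θ)] at H
    simp only [skewProd] at H
    rw [hform _] at H
    simp only at H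
    have H2 := congrArg Prod.snd H
    simp only at H2
    -- H2 : θ + ↑U(x,θ) + ↑(∫ f ∘ φ_s(hbar x)) = θ + ↑B τ + ↑U(φ τ x, θ + ↑B τ)
    have hAeq : (∫ s in (0:ℝ)..τ, f (φ s (hbar x))) = A τ := rfl
    have hfix : (∫ s in (0:ℝ)..τ, f (φ s ((h (x,θ)).1))) = A τ := by
      rw [hform (x, θ)]
    calc ((U (x, θ) + A τ - B τ - U (φ τ x, θ + ((B τ : ℝ) : AddCircle (1:ℝ))) : ℝ) :
        AddCircle (1:ℝ))
        = (θ + ((U (x, θ) : ℝ) : AddCircle (1:ℝ)) + ((A τ : ℝ) : AddCircle (1:ℝ)))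
          - (θ + ((B τ : ℝ) : AddCircle (1:ℝ))
            + ((U (φ τ x, θ + ((B τ : ℝ) : AddCircle (1:ℝ))) : ℝ) : AddCircle (1:ℝ))) := by
          simp only [QuotientAddGroup.mk_sub, QuotientAddGroup.mk_add]
          abel
      _ = 0 := by rw [H2]; abel
  -- hence the real identity
  have hreal : ∀ (τ : ℝ) (θ : AddCircle (1:ℝ)),
      U (φ τ x, θ + ((B τ : ℝ) : AddCircle (1:ℝ))) = U (x, θ) + A τ - B τ := by
    intro τ θ
    set k : ℝ → ℝ := fun τ =>
      U (x, θ) + A τ - B τ - U (φ τ x, θ + ((B τ : ℝ) : AddCircle (1:ℝ))) with hk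
    have hkc : Continuous k := by
      apply Continuous.sub
      · exact (continuous_const.add hAc).sub hBc
      · exact hU.comp ((φ.continuous continuous_id continuous_const).prodMk
          (continuous_const.add (hcoe.comp hBc)))
    have hk0 : k 0 = 0 := by
      simp [hk, hA, hB, intervalIntegral.integral_same, φ.map_zero_apply]
    have hkz : ∀ τ, ∃ n : ℤ, (n : ℝ) = k τ := by
      intro τ
      have := hmod τ θ
      rw [AddCircle.coe_eq_zero_iff] at this
      obtain ⟨n, hn⟩ := this
      exact ⟨n, by simpa using hn⟩
    have h0 := int_valued_zero k hkc hk0 hkz τ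
    have h0' : U (x, θ) + A τ - B τ - U (φ τ x, θ + ((B τ : ℝ) : AddCircle (1:ℝ))) = 0 := h0
    linarith
  -- now integrate in θ
  have hUc1 : Integrable (fun θ : AddCircle (1:ℝ) => U (φ t x, θ)) volume := by
    apply Continuous.integrable_of_hasCompactSupport
    · exact hU.comp (continuous_const.prodMk continuous_id)
    · exact IsCompact.of_isClosed_subset isCompact_univ (isClosed_tsupport _) (Set.subset_univ _)
  have hvol : (volume (Set.univ : Set (AddCircle (1:ℝ)))).toReal = 1 := by
    rw [AddCircle.measure_univ]; simp
  have key : u (φ t x) = u x + (A t - B t) := by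
    rw [hu, hu]
    have h1 : (∫ θ : AddCircle (1:ℝ), U (φ t x, θ))
        = ∫ θ : AddCircle (1:ℝ), U (φ t x, θ + ((B t : ℝ) : AddCircle (1:ℝ))) :=
      (integral_add_right_eq_self (fun θ => U (φ t x, θ)) _).symm
    rw [h1]
    have h2 : (fun θ : AddCircle (1:ℝ) => U (φ t x, θ + ((B t : ℝ) : AddCircle (1:ℝ))))
        = fun θ => U (x, θ) + (A t - B t) := by
      funext θ; rw [hreal t θ]; ring
    rw [h2]
    have hUx : Integrable (fun θ : AddCircle (1:ℝ) => U (x, θ)) volume := by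
      apply Continuous.integrable_of_hasCompactSupport
      · exact hU.comp (continuous_const.prodMk continuous_id)
      · exact IsCompact.of_isClosed_subset isCompact_univ (isClosed_tsupport _) (Set.subset_univ _)
    rw [integral_add hUx (integrable_const _), integral_const, smul_eq_mul, measureReal_def, hvol]
    ring
  rw [key]
  have hAB : A t - B t = ∫ s in (0:ℝ)..t, (f (hbar (φ s x)) - g (φ s x)) := by
    rw [hA, hB, ← intervalIntegral.integral_sub (hfc.intervalIntegrable 0 t)
      (hgc.intervalIntegrable 0 t)]
    congr 1
    funext s
    rw [hcomm s x]
  linarith [hAB]
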